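/- Let X be a measurable space and (P_t)_{t≥0} a family of sub-Markov kernels from X to X satisfying: P_0 is the identity kernel; the semigroup (Chapman–Kolmogorov) property P_{t+s}(x, A) = ∫_X P_s(y, A) P_t(x, dy) holds for all t, s ≥ 0, x ∈ X and measurable A ⊆ X; and for every probability measure ρ on X and every measurable A, the map s ↦ (ρP_s)(A) is measurable on [0,∞). Suppose ν is a probability measure on X and β is a real number with 0 < β < 1 such that νP_1 = β·ν. Then, with θ := −log β > 0, there exists a probability measure ν' on X such that ν'P_t = e^{−θt}·ν' for all t ≥ 0. -/

import Mathlib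

open MeasureTheory ProbabilityTheory
open scoped NNReal
open scoped ENNReal

/-- Lemma 3.1 of the paper (kernel-semigroup form): if `(P_t)` is a measurable
sub-Markov semigroup on `X` and `ν` is a probability measure with `νP_1 = β ν` for
some `0 < β < 1`, then with `θ = -log β > 0` there is a probability measure `ν'`
with `ν'P_t = e^{-θ t} ν'` for all `t ≥ 0`. -/
theorem qsd_from_time_one_eigenmeasure {X : Type*} [MeasurableSpace X]
    (P : ℝ≥0 → Kernel X X)
    (hsub : ∀ t x, P t x Set.univ ≤ 1)
    (h0 : ∀ x, P 0 x = Measure.dirac x)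
    (hsemi : ∀ t s : ℝ≥0, ∀ x : X, ∀ A : Set X, MeasurableSet A →
      P (t + s) x A = ∫⁻ y, P s y A ∂(P t x))
    (hmeas : ∀ ρ : Measure X, IsProbabilityMeasure ρ → ∀ A : Set X, MeasurableSet A →
      Measurable fun s : ℝ≥0 => (ρ.bind fun x => P s x) A)
    (ν : Measure X) (hν : IsProbabilityMeasure ν)
    (β : ℝ) (hβ0 : 0 < β) (hβ1 : β < 1)
    (heig : (ν.bind fun x => P 1 x) = ENNReal.ofReal β • ν) :
    ∃ θ : ℝ, θ = -Real.log β ∧ 0 < θ ∧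
      ∃ ν' : Measure X, IsProbabilityMeasure ν' ∧
        ∀ t : ℝ≥0, (ν'.bind fun x => P t x)
          = ENNReal.ofReal (Real.exp (-θ * (t : ℝ))) • ν' := by
  classical
  set θ : ℝ := -Real.log β with hθdef
  have hθpos : 0 < θ := by
    have := Real.log_neg hβ0 hβ1
    simp only [hθdef]; linarith
  have hexpθβ : Real.exp θ * β = 1 := by
    rw [hθdef, Real.exp_neg, Real.exp_log hβ0]
    field_simp
  refine ⟨θ, rfl, hθpos, ?_⟩
  -- the family of measures νP_s
  set μ : ℝ≥0 → Measure X := fun s => ν.bind fun x => P s x with hμdef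
  have hmeasμ : Measurable μ :=
    Measure.measurable_of_measurable_coe _ fun A hA => hmeas ν hν A hA
  -- kernel semigroup at the level of measures
  have hker : ∀ (s t : ℝ≥0) (x : X), ((P s x).bind fun y => P t y) = P (s + t) x := by
    intro s t x
    ext A hA
    rw [Measure.bind_apply hA (P t).measurable.aemeasurable, hsemi s t x A hA]
  have hbindsemi : ∀ (ρ : Measure X) (s t : ℝ≥0),
      ((ρ.bind fun x => P s x).bind fun x => P t x) = ρ.bind fun x => P (s + t) x := by
    intro ρ s t
    rw [Measure.bind_bind (P s).measurable.aemeasurable (P t).measurable.aemeasurable]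
    congr 1
    funext x
    exact hker s t x
  have hμsemi : ∀ s t : ℝ≥0, ((μ s).bind fun x => P t x) = μ (s + t) := fun s t =>
    hbindsemi ν s t
  -- bind commutes with scalar multiplication
  have hsmulbind : ∀ (c : ℝ≥0∞) (ρ : Measure X) (f : X → Measure X), Measurable f →
      (c • ρ).bind f = c • ρ.bind f := by
    intro c ρ f hf
    ext A hA
    rw [Measure.bind_apply hA hf.aemeasurable, lintegral_smul_measure, Measure.smul_apply,
      Measure.bind_apply hA hf.aemeasurable]
  -- the one-step eigenvalue relation, shifted
  have hshift : ∀ s : ℝ≥0, μ (s + 1) = ENNReal.ofReal β • μ s := by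
    intro s
    have h1 : μ (1 + s) = (μ 1).bind fun x => P s x := (hμsemi 1 s).symm
    have h2 : μ 1 = ENNReal.ofReal β • ν := heig
    rw [add_comm, h1, h2, hsmulbind _ _ _ (P s).measurable]
  -- total masses
  have hμuniv_le : ∀ s : ℝ≥0, μ s Set.univ ≤ 1 := by
    intro s
    rw [hμdef]
    rw [Measure.bind_apply MeasurableSet.univ (P s).measurable.aemeasurable]
    calc ∫⁻ x, P s x Set.univ ∂ν ≤ ∫⁻ _, 1 ∂ν := lintegral_mono fun x => hsub s x
      _ = 1 := by simp [hν.measure_univ]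
  have hμuniv_ge : ∀ s : ℝ≥0, s ≤ 1 → ENNReal.ofReal β ≤ μ s Set.univ := by
    intro s hs
    have h1 : μ 1 Set.univ = ENNReal.ofReal β := by
      rw [show μ 1 = ENNReal.ofReal β • ν from heig]
      simp [hν.measure_univ]
    have h2 : μ 1 = (μ s).bind fun x => P (1 - s) x := by
      rw [hμsemi s (1 - s), add_tsub_cancel_of_le hs]
    calc ENNReal.ofReal β = μ 1 Set.univ := h1.symm
      _ = ∫⁻ x, P (1 - s) x Set.univ ∂(μ s) := by
          rw [h2, Measure.bind_apply MeasurableSet.univ (P (1 - s)).measurable.aemeasurable]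
      _ ≤ ∫⁻ _, 1 ∂(μ s) := lintegral_mono fun x => hsub _ x
      _ = μ s Set.univ := by simp
  -- the averaging measure on [0,1) with density e^{θ s}
  set lam : Measure ℝ :=
    (volume.restrict (Set.Ico (0 : ℝ) 1)).withDensity
      (fun s => ENNReal.ofReal (Real.exp (θ * s))) with hlamdef
  have hdens : Measurable fun s : ℝ => ENNReal.ofReal (Real.exp (θ * s)) :=
    (Real.measurable_exp.comp (measurable_const_mul θ)).ennreal_ofReal
  set F : ℝ → Measure X := fun s => μ s.toNNReal with hFdef
  have hF : Measurable F := hmeasμ.comp measurable_real_toNNReal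
  set m : Measure X := lam.bind F with hmdef
  -- formula for binds against lam
  have hbindA : ∀ (h : ℝ → Measure X), Measurable h → ∀ A : Set X, MeasurableSet A →
      (lam.bind h) A
        = ∫⁻ s in Set.Ico (0 : ℝ) 1, ENNReal.ofReal (Real.exp (θ * s)) * h s A := by
    intro h hh A hA
    have hg' : Measurable fun s : ℝ => h s A := (Measure.measurable_coe hA).comp hh
    rw [Measure.bind_apply hA hh.aemeasurable, hlamdef,
      lintegral_withDensity_eq_lintegral_mul _ hdens hg']
    rfl
  have hmA : ∀ A : Set X, MeasurableSet A →
      m A = ∫⁻ s in Set.Ico (0 : ℝ) 1,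
        ENNReal.ofReal (Real.exp (θ * s)) * μ s.toNNReal A := by
    intro A hA
    exact hbindA F hF A hA
  -- pointwise periodicity of s ↦ e^{θ s} μ_s(A) on [0,∞)
  have hper : ∀ (A : Set X) (u : ℝ), 0 ≤ u →
      ENNReal.ofReal (Real.exp (θ * (u + 1))) * μ (u + 1).toNNReal A
        = ENNReal.ofReal (Real.exp (θ * u)) * μ u.toNNReal A := by
    intro A u hu
    have h1 : (u + 1).toNNReal = u.toNNReal + 1 := by
      rw [Real.toNNReal_add hu zero_le_one]
      simp
    have h2 : ENNReal.ofReal (Real.exp θ) * ENNReal.ofReal β = 1 := by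
      rw [← ENNReal.ofReal_mul (Real.exp_nonneg _), hexpθβ, ENNReal.ofReal_one]
    rw [h1, hshift, Measure.smul_apply, smul_eq_mul, mul_add θ, mul_one, Real.exp_add,
      ENNReal.ofReal_mul (Real.exp_nonneg _)]
    calc ENNReal.ofReal (Real.exp (θ * u)) * ENNReal.ofReal (Real.exp θ)
          * (ENNReal.ofReal β * μ u.toNNReal A)
        = (ENNReal.ofReal (Real.exp θ) * ENNReal.ofReal β)
            * (ENNReal.ofReal (Real.exp (θ * u)) * μ u.toNNReal A) := by ring
      _ = ENNReal.ofReal (Real.exp (θ * u)) * μ u.toNNReal A := by rw [h2, one_mul]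
  -- translation of set lintegrals
  have htrans : ∀ (f : ℝ → ℝ≥0∞), Measurable f → ∀ a b c : ℝ,
      ∫⁻ s in Set.Ico a b, f (s + c) = ∫⁻ u in Set.Ico (a + c) (b + c), f u := by
    intro f hf a b c
    have h := MeasureTheory.setLIntegral_map (μ := (volume : Measure ℝ))
      (s := Set.Ico (a + c) (b + c)) measurableSet_Ico hf (measurable_add_const c)
    rw [map_add_right_eq_self] at h
    rw [h, Set.preimage_add_const_Ico]
    simp
  -- the eigen-relation for m, for t ≤ 1
  have hbase : ∀ t : ℝ≥0, t ≤ 1 →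
      (m.bind fun x => P t x) = ENNReal.ofReal (Real.exp (-θ * (t : ℝ))) • m := by
    intro t ht
    have htR0 : (0 : ℝ) ≤ (t : ℝ) := t.coe_nonneg
    have htR1 : (t : ℝ) ≤ 1 := by exact_mod_cast ht
    have hmeas2 : Measurable fun s : ℝ => μ (s.toNNReal + t) :=
      hmeasμ.comp (measurable_real_toNNReal.add measurable_const)
    have hb : (m.bind fun x => P t x) = lam.bind fun s => μ (s.toNNReal + t) := by
      rw [hmdef, Measure.bind_bind hF.aemeasurable (P t).measurable.aemeasurable]
      congr 1
      funext s
      exact hμsemi s.toNNReal t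
    ext A hA
    have hgmeas : Measurable fun u : ℝ =>
        ENNReal.ofReal (Real.exp (θ * u)) * μ u.toNNReal A :=
      hdens.mul ((Measure.measurable_coe hA).comp hF)
    set g : ℝ → ℝ≥0∞ := fun u => ENNReal.ofReal (Real.exp (θ * u)) * μ u.toNNReal A
      with hgdef
    -- step 1: the integrand
    have step1 : (m.bind fun x => P t x) A
        = ∫⁻ s in Set.Ico (0 : ℝ) 1,
            ENNReal.ofReal (Real.exp (-θ * (t : ℝ))) * g (s + (t : ℝ)) := by
      rw [hb, hbindA _ hmeas2 A hA]
      refine setLIntegral_congr_fun measurableSet_Ico (fun s hs => ?_)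
      have hs0 : (0 : ℝ) ≤ s := hs.1
      have hadd : (s + (t : ℝ)).toNNReal = s.toNNReal + t := by
        rw [Real.toNNReal_add hs0 htR0, Real.toNNReal_coe]
      rw [hgdef]
      simp only
      rw [hadd, ← mul_assoc, ← ENNReal.ofReal_mul (Real.exp_nonneg _), ← Real.exp_add]
      ring_nf
    -- step 2: translate the integral
    have step2 : ∫⁻ s in Set.Ico (0 : ℝ) 1, g (s + (t : ℝ))
        = ∫⁻ s in Set.Ico (0 : ℝ) 1, g s := by
      have hsplit : Set.Ico (0 : ℝ) 1
          = Set.Ico (0 : ℝ) (1 - (t : ℝ)) ∪ Set.Ico (1 - (t : ℝ)) 1 := by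
        rw [Set.Ico_union_Ico_eq_Ico (by linarith) (by linarith)]
      have hdisj : Disjoint (Set.Ico (0 : ℝ) (1 - (t : ℝ))) (Set.Ico (1 - (t : ℝ)) 1) := by
        apply Set.disjoint_left.mpr
        intro x hx hx'
        exact absurd hx'.1 (not_le.mpr hx.2)
      have hdisj2 : Disjoint (Set.Ico (0 : ℝ) (t : ℝ)) (Set.Ico ((t : ℝ)) 1) := by
        apply Set.disjoint_left.mpr
        intro x hx hx'
        exact absurd hx'.1 (not_le.mpr hx.2)
      have e1 : ∫⁻ s in Set.Ico (0 : ℝ) (1 - (t : ℝ)), g (s + (t : ℝ))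
          = ∫⁻ u in Set.Ico ((t : ℝ)) 1, g u := by
        rw [htrans g hgmeas 0 (1 - (t : ℝ)) (t : ℝ)]
        norm_num
      have e2 : ∫⁻ s in Set.Ico (1 - (t : ℝ)) 1, g (s + (t : ℝ))
          = ∫⁻ u in Set.Ico (0 : ℝ) (t : ℝ), g u := by
        have eper : ∫⁻ s in Set.Ico (1 - (t : ℝ)) 1, g (s + (t : ℝ))
            = ∫⁻ s in Set.Ico (1 - (t : ℝ)) 1, g (s + ((t : ℝ) - 1)) := by
          refine setLIntegral_congr_fun measurableSet_Ico (fun s hs => ?_)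
          have hnn : 0 ≤ s + ((t : ℝ) - 1) := by
            have := hs.1; linarith
          have : s + (t : ℝ) = (s + ((t : ℝ) - 1)) + 1 := by ring
          rw [this, hgdef]
          exact hper A _ hnn
        rw [eper, htrans g hgmeas (1 - (t : ℝ)) 1 ((t : ℝ) - 1)]
        norm_num
      calc ∫⁻ s in Set.Ico (0 : ℝ) 1, g (s + (t : ℝ))
          = (∫⁻ s in Set.Ico (0 : ℝ) (1 - (t : ℝ)), g (s + (t : ℝ)))
              + ∫⁻ s in Set.Ico (1 - (t : ℝ)) 1, g (s + (t : ℝ)) := by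
            rw [← lintegral_union measurableSet_Ico hdisj, ← hsplit]
        _ = (∫⁻ u in Set.Ico (0 : ℝ) (t : ℝ), g u) + ∫⁻ u in Set.Ico ((t : ℝ)) 1, g u := by
            rw [e1, e2, add_comm]
        _ = ∫⁻ s in Set.Ico (0 : ℝ) 1, g s := by
            rw [← lintegral_union measurableSet_Ico hdisj2,
              Set.Ico_union_Ico_eq_Ico htR0 htR1]
    calc (m.bind fun x => P t x) A
        = ∫⁻ s in Set.Ico (0 : ℝ) 1,
            ENNReal.ofReal (Real.exp (-θ * (t : ℝ))) * g (s + (t : ℝ)) := step1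
      _ = ENNReal.ofReal (Real.exp (-θ * (t : ℝ)))
            * ∫⁻ s in Set.Ico (0 : ℝ) 1, g (s + (t : ℝ)) := by
          have hgt : Measurable fun s : ℝ => g (s + (t : ℝ)) :=
            hgmeas.comp (measurable_add_const _)
          rw [lintegral_const_mul _ hgt]
      _ = ENNReal.ofReal (Real.exp (-θ * (t : ℝ)))
            * ∫⁻ s in Set.Ico (0 : ℝ) 1, g s := by rw [step2]
      _ = (ENNReal.ofReal (Real.exp (-θ * (t : ℝ))) • m) A := by
          rw [Measure.smul_apply, smul_eq_mul, hmA A hA]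
  -- extend to all times by induction
  have hall : ∀ (n : ℕ) (t : ℝ≥0), (t : ℝ) ≤ n + 1 →
      (m.bind fun x => P t x) = ENNReal.ofReal (Real.exp (-θ * (t : ℝ))) • m := by
    intro n
    induction n with
    | zero =>
        intro t ht
        have ht' : (t : ℝ) ≤ 1 := by norm_num at ht; exact ht
        exact hbase t (by exact_mod_cast ht')
    | succ n ih =>
        intro t ht
        by_cases hle : (t : ℝ) ≤ n + 1
        · exact ih t hle
        · push_neg at hle
          have h1t : (1 : ℝ≥0) ≤ t := by
            have : (1 : ℝ) ≤ (t : ℝ) := by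
              have : (0 : ℝ) ≤ (n : ℝ) := Nat.cast_nonneg n
              linarith
            exact_mod_cast this
          have hsplit : t = (t - 1) + 1 := (tsub_add_cancel_of_le h1t).symm
          have hc : ((t - 1 : ℝ≥0) : ℝ) = (t : ℝ) - 1 := by
            rw [NNReal.coe_sub h1t]; simp
          have ht1 : ((t - 1 : ℝ≥0) : ℝ) ≤ n + 1 := by
            rw [hc]
            push_cast at ht ⊢
            linarith
          calc (m.bind fun x => P t x)
              = ((m.bind fun x => P (t - 1) x).bind fun x => P 1 x) := by
                rw [hbindsemi m (t - 1) 1, ← hsplit]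
            _ = ((ENNReal.ofReal (Real.exp (-θ * ((t - 1 : ℝ≥0) : ℝ))) • m).bind
                  fun x => P 1 x) := by rw [ih (t - 1) ht1]
            _ = ENNReal.ofReal (Real.exp (-θ * ((t - 1 : ℝ≥0) : ℝ)))
                  • (m.bind fun x => P 1 x) := hsmulbind _ _ _ (P 1).measurable
            _ = ENNReal.ofReal (Real.exp (-θ * ((t - 1 : ℝ≥0) : ℝ)))
                  • (ENNReal.ofReal (Real.exp (-θ * ((1 : ℝ≥0) : ℝ))) • m) := by
                rw [hbase 1 le_rfl]
            _ = ENNReal.ofReal (Real.exp (-θ * (t : ℝ))) • m := by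
                rw [smul_smul, ← ENNReal.ofReal_mul (Real.exp_nonneg _), ← Real.exp_add, hc]
                norm_num
                ring_nf
  -- total mass of m is positive and finite
  have hm_le : m Set.univ ≤ ENNReal.ofReal (Real.exp θ) := by
    rw [hmA Set.univ MeasurableSet.univ]
    calc ∫⁻ s in Set.Ico (0 : ℝ) 1, ENNReal.ofReal (Real.exp (θ * s)) * μ s.toNNReal Set.univ
        ≤ ∫⁻ _ in Set.Ico (0 : ℝ) 1, ENNReal.ofReal (Real.exp θ) := by
          refine setLIntegral_mono measurable_const fun s hs => ?_
          calc ENNReal.ofReal (Real.exp (θ * s)) * μ s.toNNReal Set.univ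
              ≤ ENNReal.ofReal (Real.exp (θ * s)) * 1 :=
                mul_le_mul_right (hμuniv_le _) _
            _ ≤ ENNReal.ofReal (Real.exp θ) := by
                rw [mul_one]
                apply ENNReal.ofReal_le_ofReal
                apply Real.exp_le_exp.mpr
                nlinarith [hs.1, hs.2, hθpos]
      _ = ENNReal.ofReal (Real.exp θ) := by
          rw [setLIntegral_const]
          simp [Real.volume_Ico]
  have hm_ge : ENNReal.ofReal β ≤ m Set.univ := by
    rw [hmA Set.univ MeasurableSet.univ]
    have : ∫⁻ _ in Set.Ico (0 : ℝ) 1, ENNReal.ofReal β ∂volume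
        ≤ ∫⁻ s in Set.Ico (0 : ℝ) 1,
            ENNReal.ofReal (Real.exp (θ * s)) * μ s.toNNReal Set.univ := by
      refine setLIntegral_mono
        (hdens.mul ((Measure.measurable_coe MeasurableSet.univ).comp hF)) fun s hs => ?_
      have h1 : (1 : ℝ≥0∞) ≤ ENNReal.ofReal (Real.exp (θ * s)) := by
        rw [← ENNReal.ofReal_one]
        apply ENNReal.ofReal_le_ofReal
        rw [← Real.exp_zero]
        apply Real.exp_le_exp.mpr
        nlinarith [hs.1, hθpos]
      have h2 : ENNReal.ofReal β ≤ μ s.toNNReal Set.univ := by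
        apply hμuniv_ge
        have : s ≤ 1 := le_of_lt hs.2
        exact_mod_cast Real.toNNReal_le_one.mpr this
      calc ENNReal.ofReal β ≤ 1 * μ s.toNNReal Set.univ := by rwa [one_mul]
        _ ≤ ENNReal.ofReal (Real.exp (θ * s)) * μ s.toNNReal Set.univ :=
            mul_le_mul_left h1 _
    refine le_trans (le_of_eq ?_) this
    rw [setLIntegral_const]
    simp [Real.volume_Ico]
  have hm_ne_top : m Set.univ ≠ ⊤ :=
    ne_top_of_le_ne_top ENNReal.ofReal_ne_top hm_le
  have hm_ne_zero : m Set.univ ≠ 0 := by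
    intro h
    rw [h] at hm_ge
    exact absurd hm_ge (by simp [ENNReal.ofReal_pos.mpr hβ0, le_zero_iff,
      (ENNReal.ofReal_pos.mpr hβ0).ne'])
  -- normalize
  set c : ℝ≥0∞ := m Set.univ with hcdef
  refine ⟨c⁻¹ • m, ?_, ?_⟩
  · constructor
    rw [Measure.smul_apply, smul_eq_mul, ← hcdef]
    exact ENNReal.inv_mul_cancel hm_ne_zero hm_ne_top
  · intro t
    have hn : (t : ℝ) ≤ (⌈(t : ℝ)⌉₊ : ℝ) + 1 := by
      have := Nat.le_ceil (t : ℝ)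
      linarith
    calc ((c⁻¹ • m).bind fun x => P t x)
        = c⁻¹ • (m.bind fun x => P t x) := hsmulbind _ _ _ (P t).measurable
      _ = c⁻¹ • (ENNReal.ofReal (Real.exp (-θ * (t : ℝ))) • m) := by
          rw [hall ⌈(t : ℝ)⌉₊ t hn]
      _ = ENNReal.ofReal (Real.exp (-θ * (t : ℝ))) • (c⁻¹ • m) := smul_comm _ _ _
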